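/- Let Ω̃ be any nonempty compact subset of ℝⁿ (n ≥ 2) and let δ > 0. Then the minimal unfolded region Uf(Ω̃ + δBⁿ) of the δ-parallel body Ω̃ + δBⁿ is contained in the convex hull of Ω̃. -/

import Mathlib

open MeasureTheory Pointwise RealInnerProductSpace

noncomputable section

/-- Reflection of `ℝⁿ` across the hyperplane `{x : ⟪x, v⟫ = b}`. -/
def ReflVB {n : ℕ} (v : EuclideanSpace ℝ (Fin n)) (b : ℝ)
    (x : EuclideanSpace ℝ (Fin n)) : EuclideanSpace ℝ (Fin n) :=
  x - (2 * (⟪x, v⟫ - b)) • v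

/-- `M_v(Ω) = sup_{x ∈ Ω} x·v`. -/
def MV {n : ℕ} (Ω : Set (EuclideanSpace ℝ (Fin n)))
    (v : EuclideanSpace ℝ (Fin n)) : ℝ :=
  sSup ((fun x => ⟪x, v⟫) '' Ω)

/-- `u_v(Ω)`. -/
def UV {n : ℕ} (Ω : Set (EuclideanSpace ℝ (Fin n)))
    (v : EuclideanSpace ℝ (Fin n)) : ℝ :=
  sInf {a : ℝ | a ≤ MV Ω v ∧
    ∀ b : ℝ, a ≤ b → b ≤ MV Ω v →
      ReflVB v b '' (Ω ∩ {x | b < ⟪x, v⟫}) ⊆ Ω}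

/-- The minimal unfolded region of `Ω`. -/
def Uf {n : ℕ} (Ω : Set (EuclideanSpace ℝ (Fin n))) :
    Set (EuclideanSpace ℝ (Fin n)) :=
  ⋂ v ∈ {v : EuclideanSpace ℝ (Fin n) | ‖v‖ = 1}, {x | ⟪x, v⟫ ≤ UV Ω v}

/-- auxiliary: summing a function vanishing off the range of an embedding. -/
lemma sum_extend_eq' {α β M : Type*} [Fintype α] [Fintype β] [AddCommMonoid M]
    (e : α ↪ β) (g : β → M) (hg : ∀ i, (¬∃ a, e a = i) → g i = 0) :
    ∑ i, g i = ∑ a, g (e a) := by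
  classical
  have h1 : ∑ i ∈ Finset.univ.image (fun a => e a), g i = ∑ i, g i :=
    Finset.sum_subset (Finset.subset_univ _) (fun i _ hi => hg i (by
      simpa [Finset.mem_image] using hi))
  rw [← h1, Finset.sum_image (fun a _ b _ h => e.injective h)]

/-- The convex hull of a compact set in Euclidean space is compact. -/
lemma isCompact_convexHull_euclidean {n : ℕ} {Ω : Set (EuclideanSpace ℝ (Fin n))}
    (hc : IsCompact Ω) : IsCompact (convexHull ℝ Ω) := by
  classical
  set N := n + 1 with hN
  set F : (Fin N → EuclideanSpace ℝ (Fin n)) × (Fin N → ℝ) → EuclideanSpace ℝ (Fin n) := fun p => ∑ i, p.2 i • p.1 i with hF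
  have hFc : Continuous F := continuous_finset_sum _ fun i _ =>
    ((continuous_apply i).comp continuous_snd).smul ((continuous_apply i).comp continuous_fst)
  set K := (Set.univ.pi fun _ : Fin N => Ω) ×ˢ stdSimplex ℝ (Fin N) with hKdef
  have hK : IsCompact K := (isCompact_univ_pi fun _ => hc).prod (isCompact_stdSimplex ℝ _)
  have himg : convexHull ℝ Ω = F '' K := by
    apply Set.Subset.antisymm
    · intro x hx
      rw [convexHull_eq_union] at hx
      simp only [Set.mem_iUnion] at hx
      obtain ⟨t, hts, hai, hxt⟩ := hx
      rcases t.eq_empty_or_nonempty with rfl | ⟨y₀, hy₀t⟩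
      · simp at hxt
      have hcard : t.card ≤ N := by
        have h1 := hai.card_le_finrank_succ
        have h2 : Module.finrank ℝ ↥(vectorSpan ℝ (Set.range (Subtype.val : ↑t → EuclideanSpace ℝ (Fin n))))
            ≤ Module.finrank ℝ (EuclideanSpace ℝ (Fin n)) := Submodule.finrank_le _
        have h3 : Module.finrank ℝ (EuclideanSpace ℝ (Fin n)) = n := finrank_euclideanSpace_fin
        have := h1.trans (by omega : Module.finrank ℝ
          ↥(vectorSpan ℝ (Set.range (Subtype.val : ↑t → EuclideanSpace ℝ (Fin n)))) + 1 ≤ n + 1)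
        simpa [Fintype.card_coe, hN] using this
      obtain ⟨e⟩ : Nonempty (↑t ↪ Fin N) := by
        rw [Function.Embedding.nonempty_iff_card_le]
        simpa [Fintype.card_coe] using hcard
      rw [Finset.convexHull_eq] at hxt
      obtain ⟨w, hw0, hw1, hcm⟩ := hxt
      rw [Finset.centerMass_eq_of_sum_1 _ _ hw1] at hcm
      set wh : Fin N → ℝ := Function.extend (fun a : ↑t => e a) (fun a => w ↑a) (fun _ => 0)
        with hwh
      set xh : Fin N → EuclideanSpace ℝ (Fin n) := Function.extend (fun a : ↑t => e a) (fun a => (a : EuclideanSpace ℝ (Fin n)))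
        (fun _ => y₀) with hxh
      have hinj : Function.Injective (fun a : ↑t => e a) := e.injective
      have hwh0 : ∀ i, (¬∃ a, e a = i) → wh i = 0 := fun i hi => by
        rw [hwh, Function.extend_apply' _ _ _ hi]
      have hwhe : ∀ a : ↑t, wh (e a) = w ↑a := fun a => hinj.extend_apply _ _ a
      have hxhe : ∀ a : ↑t, xh (e a) = ↑a := fun a => hinj.extend_apply _ _ a
      refine ⟨(xh, wh), ⟨?_, ?_, ?_⟩, ?_⟩
      · -- xh i ∈ Ω
        intro i _
        show xh i ∈ Ω
        by_cases hi : ∃ a, e a = i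
        · obtain ⟨a, rfl⟩ := hi
          rw [hxhe]
          exact hts a.2
        · rw [hxh, Function.extend_apply' _ _ _ hi]
          exact hts hy₀t
      · -- nonneg
        intro i
        show 0 ≤ wh i
        by_cases hi : ∃ a, e a = i
        · obtain ⟨a, rfl⟩ := hi
          rw [hwhe]
          exact hw0 _ a.2
        · simp [hwh0 i hi]
      · -- sum = 1
        show ∑ i, wh i = 1
        rw [sum_extend_eq' e wh hwh0,
          Finset.sum_congr rfl (fun (a : ↑t) _ => hwhe a),
          Finset.sum_coe_sort t (fun y => w y)]
        exact hw1
      · -- F value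
        show ∑ i, wh i • xh i = x
        rw [sum_extend_eq' e (fun i => wh i • xh i)
            (fun i hi => by rw [hwh0 i hi, zero_smul])]
        have hstep : ∑ a : ↑t, wh (e a) • xh (e a)
            = ∑ a : ↑t, w ↑a • (↑a : EuclideanSpace ℝ (Fin n)) :=
          Finset.sum_congr rfl (fun a _ => by rw [hwhe, hxhe])
        rw [hstep, Finset.sum_coe_sort t (fun y => w y • y)]
        simpa using hcm
    · rintro _ ⟨⟨xs, ws⟩, ⟨hxs, hws⟩, rfl⟩
      exact (convex_convexHull ℝ Ω).sum_mem (fun i _ => hws.1 i) hws.2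
        (fun i _ => subset_convexHull ℝ Ω (hxs i (Set.mem_univ i)))
  rw [himg]
  exact hK.image hFc

/-- Key estimate: `u_v` of the parallel body is at most `M_v(Ω)`. -/
lemma uv_parallel_le {n : ℕ} {Ω : Set (EuclideanSpace ℝ (Fin n))}
    (hne : Ω.Nonempty) (hc : IsCompact Ω) {δ : ℝ} (hδ : 0 < δ)
    {v : EuclideanSpace ℝ (Fin n)} (hv : ‖v‖ = 1) :
    UV (Ω + Metric.closedBall (0 : EuclideanSpace ℝ (Fin n)) δ) v ≤ MV Ω v := by
  classical
  set Ω' := Ω + Metric.closedBall (0 : EuclideanSpace ℝ (Fin n)) δ with hΩ'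
  have hc' : IsCompact Ω' := hc.add (isCompact_closedBall 0 δ)
  have hne' : Ω'.Nonempty := hne.add ⟨0, Metric.mem_closedBall_self hδ.le⟩
  have hco : Continuous fun x : EuclideanSpace ℝ (Fin n) => ⟪x, v⟫ := continuous_id.inner continuous_const
  have hbA : BddAbove ((fun x => ⟪x, v⟫) '' Ω) := (hc.image hco).bddAbove
  have hbA' : BddAbove ((fun x => ⟪x, v⟫) '' Ω') := (hc'.image hco).bddAbove
  have hbB' : BddBelow ((fun x => ⟪x, v⟫) '' Ω') := (hc'.image hco).bddBelow
  have hsub : Ω ⊆ Ω' := fun x hx =>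
    Set.mem_add.2 ⟨x, hx, 0, Metric.mem_closedBall_self hδ.le, add_zero x⟩
  have hMM : MV Ω v ≤ MV Ω' v :=
    csSup_le_csSup hbA' (hne.image _) (Set.image_mono hsub)
  have hyle : ∀ y ∈ Ω, ⟪y, v⟫ ≤ MV Ω v := fun y hy => le_csSup hbA ⟨y, hy, rfl⟩
  set m := sInf ((fun x => ⟪x, v⟫) '' Ω') with hm
  have hmle : ∀ z ∈ Ω', m ≤ ⟪z, v⟫ := fun z hz => csInf_le hbB' ⟨z, hz, rfl⟩
  obtain ⟨x₀, hx₀⟩ := hne'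
  have hvv : ⟪v, v⟫ = (1 : ℝ) := by rw [real_inner_self_eq_norm_sq, hv, one_pow]
  have hrefl_inner : ∀ (b : ℝ) (x : EuclideanSpace ℝ (Fin n)), ⟪ReflVB v b x, v⟫ = 2 * b - ⟪x, v⟫ := by
    intro b x
    simp only [ReflVB, inner_sub_left, real_inner_smul_left, hvv]
    ring
  -- the defining set of UV Ω' v
  have hbdd : BddBelow {a : ℝ | a ≤ MV Ω' v ∧
      ∀ b : ℝ, a ≤ b → b ≤ MV Ω' v →
        ReflVB v b '' (Ω' ∩ {x | b < ⟪x, v⟫}) ⊆ Ω'} := by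
    refine ⟨m, fun a ha => ?_⟩
    by_contra hcon
    push_neg at hcon
    set b := (a + m) / 2 with hb
    have hab : a ≤ b := by rw [hb]; linarith
    have hbm : b < m := by rw [hb]; linarith
    have hmM' : m ≤ MV Ω' v := (hmle x₀ hx₀).trans (le_csSup hbA' ⟨x₀, hx₀, rfl⟩)
    have hbM' : b ≤ MV Ω' v := hbm.le.trans hmM'
    have hx₀b : b < ⟪x₀, v⟫ := lt_of_lt_of_le hbm (hmle x₀ hx₀)
    have hz : ReflVB v b x₀ ∈ Ω' := ha.2 b hab hbM' ⟨x₀, ⟨hx₀, hx₀b⟩, rfl⟩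
    have h1 := hmle _ hz
    rw [hrefl_inner] at h1
    have h2 := hmle x₀ hx₀
    linarith
  refine csInf_le hbdd ⟨hMM, ?_⟩
  intro b hb hb' z hz
  obtain ⟨x, ⟨hxΩ', hxb⟩, rfl⟩ := hz
  obtain ⟨y, hy, u, hu, rfl⟩ := Set.mem_add.1 hxΩ'
  have hu' : ‖u‖ ≤ δ := by simpa using mem_closedBall_zero_iff.1 hu
  have hxb' : b < ⟪y + u, v⟫ := hxb
  set t := ⟪y + u, v⟫ - b with ht
  have ht0 : 0 < t := by rw [ht]; linarith
  have hyb : ⟪y, v⟫ ≤ b := (hyle y hy).trans hb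
  have hadd : ⟪y + u, v⟫ = ⟪y, v⟫ + ⟪u, v⟫ := inner_add_left y u v
  have huv : t ≤ ⟪u, v⟫ := by rw [ht]; linarith
  have hrepr : ReflVB v b (y + u) = y + (u - (2 * t) • v) := by
    rw [ht]
    simp only [ReflVB]
    abel
  rw [hrepr]
  refine Set.mem_add.2 ⟨y, hy, u - (2 * t) • v, ?_, rfl⟩
  rw [mem_closedBall_zero_iff]
  have h2 : ‖u - (2 * t) • v‖ ^ 2 = ‖u‖ ^ 2 - 2 * (2 * t * ⟪u, v⟫) + (2 * t) ^ 2 := by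
    rw [norm_sub_sq_real, real_inner_smul_right, norm_smul, hv, mul_one,
      Real.norm_eq_abs, sq_abs]
  nlinarith [norm_nonneg (u - (2 * t) • v), norm_nonneg u, hδ]

theorem stmt_3 (n : ℕ) (hn : 2 ≤ n) (Ω : Set (EuclideanSpace ℝ (Fin n)))
    (hne : Ω.Nonempty) (hc : IsCompact Ω) (δ : ℝ) (hδ : 0 < δ) :
    Uf (Ω + Metric.closedBall (0 : EuclideanSpace ℝ (Fin n)) δ) ⊆
      convexHull ℝ Ω := by
  intro p hp
  by_contra hns
  have hcl : IsClosed (convexHull ℝ Ω) := (isCompact_convexHull_euclidean hc).isClosed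
  obtain ⟨f, r, hfr, hrp⟩ :=
    geometric_hahn_banach_closed_point (convex_convexHull ℝ Ω) hcl hns
  set w := (InnerProductSpace.toDual ℝ (EuclideanSpace ℝ (Fin n))).symm f with hw
  have hwf : ∀ x, ⟪w, x⟫ = f x := fun x => InnerProductSpace.toDual_symm_apply
  obtain ⟨y₀, hy₀⟩ := id hne
  have hy₀h : y₀ ∈ convexHull ℝ Ω := subset_convexHull ℝ Ω hy₀
  have hwne : w ≠ 0 := by
    intro h
    have h1 := hwf y₀
    have h2 := hwf p
    rw [h, inner_zero_left] at h1 h2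
    have h3 := hfr y₀ hy₀h
    linarith
  have hnw : 0 < ‖w‖ := norm_pos_iff.2 hwne
  set v := ‖w‖⁻¹ • w with hvdef
  have hv : ‖v‖ = 1 := by
    rw [hvdef, norm_smul, norm_inv, norm_norm, inv_mul_cancel₀ hnw.ne']
  have hxv : ∀ x, ⟪x, v⟫ = ‖w‖⁻¹ * f x := fun x => by
    rw [hvdef, real_inner_smul_right, real_inner_comm, hwf]
  have hp2 : ⟪p, v⟫ ≤ UV (Ω + Metric.closedBall (0 : EuclideanSpace ℝ (Fin n)) δ) v :=
    Set.mem_iInter₂.mp hp v hv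
  have h3 : ⟪p, v⟫ ≤ MV Ω v := hp2.trans (uv_parallel_le hne hc hδ hv)
  have h4 : MV Ω v ≤ ‖w‖⁻¹ * r := by
    refine csSup_le (hne.image _) ?_
    rintro s ⟨x, hx, rfl⟩
    show ⟪x, v⟫ ≤ ‖w‖⁻¹ * r
    rw [hxv]
    exact mul_le_mul_of_nonneg_left (hfr x (subset_convexHull ℝ Ω hx)).le
      (inv_nonneg.2 hnw.le)
  have h5 : ‖w‖⁻¹ * r < ⟪p, v⟫ := by
    rw [hxv]
    exact mul_lt_mul_of_pos_left hrp (inv_pos.2 hnw)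
  linarith
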